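/- Let G be an additive subgroup of ℝ and let ε > 0 be a real number. Then M := {0} ∪ {g ∈ G : g ≥ ε} is a submonoid of (ℝ, +) that satisfies the ACCP, i.e. every ascending chain (b_n + M)_{n≥1} of principal ideals of M eventually stabilizes. -/

import Mathlib

/-- A subset `S` of an abelian group is a submonoid if it contains `0`
and is closed under addition. -/
def IsSubmonoidSet {G : Type*} [AddCommGroup G] (S : Set G) : Prop :=
  (0 : G) ∈ S ∧ ∀ a ∈ S, ∀ b ∈ S, a + b ∈ S

/-- `a` is an atom of the (sub)monoid `S`: it belongs to `S`, is not invertible in `S`,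
and whenever `a = b + c` with `b, c ∈ S`, one of `b`, `c` is invertible in `S`. -/
def IsAtomIn {G : Type*} [AddCommGroup G] (S : Set G) (a : G) : Prop :=
  a ∈ S ∧ -a ∉ S ∧ ∀ b ∈ S, ∀ c ∈ S, a = b + c → (-b ∈ S ∨ -c ∈ S)

/-- `S` is atomic: every non-invertible element of `S` is a finite sum of atoms of `S`. -/
def IsAtomicSet {G : Type*} [AddCommGroup G] (S : Set G) : Prop :=
  ∀ a ∈ S, -a ∉ S → ∃ l : Multiset G, (∀ x ∈ l, IsAtomIn S x) ∧ l.sum = a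

/-- The principal ideal `b + S` of the (sub)monoid `S`. -/
def setIdeal {G : Type*} [AddCommGroup G] (S : Set G) (b : G) : Set G :=
  {x | ∃ m ∈ S, x = b + m}

/-- `S` satisfies the ACCP: every ascending chain of principal ideals of `S` stabilizes. -/
def SatisfiesACCPSet {G : Type*} [AddCommGroup G] (S : Set G) : Prop :=
  ∀ b : ℕ → G, (∀ n, b n ∈ S) →
    (∀ n, setIdeal S (b n) ⊆ setIdeal S (b (n + 1))) →
    ∃ N, ∀ n, N ≤ n → setIdeal S (b n) = setIdeal S (b N)

/-- If `G` is an additive subgroup of `ℝ` and `ε > 0`, then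
`M = {0} ∪ {g ∈ G : g ≥ ε}` is a submonoid of `(ℝ, +)` satisfying the ACCP. -/
theorem truncated_subgroup_ACCP (G : AddSubgroup ℝ) (ε : ℝ) (hε : 0 < ε) :
    IsSubmonoidSet (({0} : Set ℝ) ∪ {g : ℝ | g ∈ G ∧ ε ≤ g}) ∧
      SatisfiesACCPSet (({0} : Set ℝ) ∪ {g : ℝ | g ∈ G ∧ ε ≤ g}) := by
  set S : Set ℝ := ({0} : Set ℝ) ∪ {g : ℝ | g ∈ G ∧ ε ≤ g} with hSdef
  have h0 : (0:ℝ) ∈ S := Or.inl rfl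
  have hnn : ∀ x ∈ S, 0 ≤ x := by
    rintro x (hx | ⟨-, hx⟩)
    · simp only [Set.mem_singleton_iff] at hx; simp [hx]
    · linarith
  have hadd : ∀ a ∈ S, ∀ b ∈ S, a + b ∈ S := by
    rintro a (ha | ⟨haG, haε⟩) b (hb | ⟨hbG, hbε⟩)
    · simp only [Set.mem_singleton_iff] at ha hb; subst ha; subst hb
      simpa using h0
    · simp only [Set.mem_singleton_iff] at ha; subst ha
      rw [zero_add]; exact Or.inr (Set.mem_setOf.mpr ⟨hbG, hbε⟩)
    · simp only [Set.mem_singleton_iff] at hb; subst hb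
      rw [add_zero]; exact Or.inr (Set.mem_setOf.mpr ⟨haG, haε⟩)
    · exact Or.inr ⟨G.add_mem haG hbG, by linarith⟩
  refine ⟨⟨h0, hadd⟩, ?_⟩
  intro b hb hchain
  have hstep : ∀ n, ∃ m ∈ S, b n = b (n+1) + m := fun n =>
    hchain n ⟨0, h0, (add_zero _).symm⟩
  have hbdd : BddBelow (Set.range b) := ⟨0, by rintro x ⟨n, rfl⟩; exact hnn _ (hb n)⟩
  have hne : (Set.range b).Nonempty := ⟨b 0, 0, rfl⟩
  have hlt : sInf (Set.range b) < sInf (Set.range b) + ε := by linarith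
  obtain ⟨x, ⟨N, rfl⟩, hxlt⟩ := (csInf_lt_iff hbdd hne).mp hlt
  refine ⟨N, fun n hn => ?_⟩
  have key : ∀ n, N ≤ n → ∃ s ∈ S, b N = b n + s := by
    intro n hn
    induction n, hn using Nat.le_induction with
    | base => exact ⟨0, h0, (add_zero _).symm⟩
    | succ n hn ih =>
      obtain ⟨s, hs, heq⟩ := ih
      obtain ⟨m, hm, hm'⟩ := hstep n
      exact ⟨m + s, hadd _ hm _ hs, by rw [heq, hm']; ring⟩
  obtain ⟨s, hs, heq⟩ := key n hn
  have hLn : sInf (Set.range b) ≤ b n := csInf_le hbdd ⟨n, rfl⟩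
  have hs0 : s = 0 := by
    rcases hs with hs | ⟨-, hs⟩
    · simpa using hs
    · linarith
  have hbn : b n = b N := by rw [heq, hs0, add_zero]
  rw [hbn]
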